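/- Let A be an n×n real symmetric positive definite matrix with n ≥ 1, let A^{1/2} denote its (unique) positive semidefinite square root, and let e_i denote the i-th standard basis vector. Define, for i = 1, …, n, the probability p_i := A_{ii}/Tr(A) and the matrix Z_i := (1/A_{ii}) · A^{1/2} e_i e_iᵀ A^{1/2}. Then Σ_{i=1}^n p_i Z_i = A / Tr(A); consequently the smallest eigenvalue of the expected projection E[Z] = Σ_i p_i Z_i equals λ_min(A)/Tr(A), i.e. μ = λ_min(A)/Tr(A) for coordinate sketches with convenient probabilities. -/

import Mathlib

open Matrix Finset Pointwise

open scoped ComplexOrder in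
/-- The positive semidefinite square root of a positive semidefinite matrix, as defined in
the older Mathlib (removed since). -/
noncomputable def Matrix.PosSemidef.sqrt {n 𝕜 : Type*} [Fintype n] [DecidableEq n] [RCLike 𝕜]
    {A : Matrix n n 𝕜} (hA : A.PosSemidef) : Matrix n n 𝕜 :=
  (hA.1.eigenvectorUnitary : Matrix n n 𝕜) * diagonal ((↑) ∘ (fun x : ℝ => √x) ∘ hA.1.eigenvalues) *
    (star (hA.1.eigenvectorUnitary : Matrix n n 𝕜))

open scoped ComplexOrder in
theorem Matrix.PosSemidef.sqrt_mul_self {n 𝕜 : Type*} [Fintype n] [DecidableEq n] [RCLike 𝕜]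
    {A : Matrix n n 𝕜} (hA : A.PosSemidef) : hA.sqrt * hA.sqrt = A := by
  unfold Matrix.PosSemidef.sqrt
  conv_rhs => rw [hA.1.spectral_theorem, Unitary.conjStarAlgAut_apply]
  have hU : (star (hA.1.eigenvectorUnitary : Matrix n n 𝕜)) * (hA.1.eigenvectorUnitary : Matrix n n 𝕜) = 1 :=
    Unitary.coe_star_mul_self _
  simp only [Matrix.mul_assoc]
  rw [← Matrix.mul_assoc (star _) _ (diagonal _ * _), hU, Matrix.one_mul, ← Matrix.mul_assoc (diagonal _),
    diagonal_mul_diagonal]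
  congr 3
  funext i
  simp only [Function.comp_apply, ← RCLike.ofReal_mul, Real.mul_self_sqrt (hA.eigenvalues_nonneg i)]

lemma sum_stdBasisMatrix_diag_eq_one {n : ℕ} :
    (∑ i : Fin n, Matrix.single i i (1:ℝ)) = 1 := by
  ext a b
  rw [Matrix.sum_apply]
  rcases eq_or_ne a b with rfl | h
  · rw [Matrix.one_apply_eq, Finset.sum_eq_single a
      (fun x _ hx => Matrix.single_apply_of_ne _ _ _ _ _ (by tauto))
      (by simp)]
    simp
  · rw [Matrix.one_apply_ne h, Finset.sum_eq_zero
      fun x _ => Matrix.single_apply_of_ne _ _ _ _ _ (fun hx => h (hx.1.symm.trans hx.2))]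

lemma posdef_diag_pos {n : ℕ} {A : Matrix (Fin n) (Fin n) ℝ} (hA : A.PosDef) (i : Fin n) :
    0 < A i i := by
  exact hA.diag_pos

/-- For an n×n real symmetric positive definite matrix A (n ≥ 1), with
pᵢ := Aᵢᵢ/Tr(A) and Zᵢ := (1/Aᵢᵢ) A^{1/2} eᵢ eᵢᵀ A^{1/2}, one has
Σ pᵢ Zᵢ = A/Tr(A); consequently the smallest eigenvalue of the expected
projection E[Z] equals λ_min(A)/Tr(A). -/
theorem expected_projection_convenient_probabilities {n : ℕ} (hn : 0 < n)
    (A : Matrix (Fin n) (Fin n) ℝ) (hA : A.PosDef)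
    (p : Fin n → ℝ) (hp : ∀ i, p i = A i i / A.trace)
    (Z : Fin n → Matrix (Fin n) (Fin n) ℝ)
    (hZ : ∀ i, Z i = (A i i)⁻¹ •
      (hA.posSemidef.sqrt * Matrix.single i i 1 * hA.posSemidef.sqrt)) :
    (∑ i, p i • Z i = (A.trace)⁻¹ • A) ∧
    ∀ hG : (∑ i, p i • Z i).IsHermitian,
      (⨅ j, hG.eigenvalues j) = (⨅ j, hA.1.eigenvalues j) / A.trace := by
  have hdiag : ∀ i, 0 < A i i := posdef_diag_pos hA
  have htr : 0 < A.trace := by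
    have : A.trace = ∑ i, A i i := by simp [Matrix.trace, Matrix.diag]
    rw [this]
    exact Finset.sum_pos (fun i _ => hdiag i) (by simpa [Finset.univ_nonempty_iff] using Fin.pos_iff_nonempty.mp hn)
  have hsum : (∑ i, p i • Z i) = (A.trace)⁻¹ • A := by
    have : ∀ i : Fin n, p i • Z i =
        (A.trace)⁻¹ • (hA.posSemidef.sqrt * Matrix.single i i 1 * hA.posSemidef.sqrt) := by
      intro i
      rw [hp i, hZ i, smul_smul]
      congr 1
      rw [div_mul_eq_mul_div, mul_inv_cancel₀ (hdiag i).ne', one_div]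
    rw [Finset.sum_congr rfl (fun i _ => this i), ← Finset.smul_sum]
    congr 1
    calc ∑ i, hA.posSemidef.sqrt * Matrix.single i i 1 * hA.posSemidef.sqrt
        = hA.posSemidef.sqrt * (∑ i, Matrix.single i i (1:ℝ)) * hA.posSemidef.sqrt := by
          simp [Finset.mul_sum, Finset.sum_mul]
      _ = A := by rw [sum_stdBasisMatrix_diag_eq_one, mul_one, hA.posSemidef.sqrt_mul_self]
  refine ⟨hsum, fun hG => ?_⟩
  -- spectra
  have hc : (A.trace)⁻¹ ≠ 0 := inv_ne_zero htr.ne'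
  set c : ℝ := (A.trace)⁻¹ with hcdef
  have hrange : Set.range hG.eigenvalues = c • Set.range hA.1.eigenvalues := by
    rw [← Matrix.IsHermitian.spectrum_real_eq_range_eigenvalues hG,
        ← Matrix.IsHermitian.spectrum_real_eq_range_eigenvalues hA.1]
    have hu : IsUnit c := isUnit_iff_ne_zero.mpr hc
    have := spectrum.unit_smul_eq_smul (R := ℝ) A hu.unit
    rw [hsum]
    simpa [Units.smul_def] using this
  have h1 : (⨅ j, hG.eigenvalues j) = sInf (Set.range hG.eigenvalues) := rfl
  have h2 : (⨅ j, hA.1.eigenvalues j) = sInf (Set.range hA.1.eigenvalues) := rfl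
  rw [h1, h2, hrange, Real.sInf_smul_of_nonneg (by positivity) _]
  rw [smul_eq_mul, div_eq_inv_mul]
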